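/- arXiv:2504.19512 — 2 statements merged into one kernel-verified Lean document; each statement's English description precedes it below -/
import Mathlib

section
/- Let G be a finite group, H ≤ G an abelian subgroup, and μ : H × H → ℂˣ a 2-cocycle. Define Â_H^μ := (1/|H|)·Σ_{h₁∈H} Σ_{h₂∈H} alt_μ(h₁,h₂)·F^{h₁,h₂} in the ribbon algebra of G. Then: (1) Â_H^μ * Â_H^μ = Â_H^μ; (2) Â_H^μ * Ω = Ω; (3) 𝐒[Â_H^μ] = Â_H^μ; (4) 𝐓[Â_H^μ] = Â_H^μ. -/
/-!
Statement 1: For a finite group `G`, an abelian subgroup `H ≤ G`, and a 2-cocycle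
`μ : H × H → ℂˣ`, the element `Â_H^μ := (1/|H|)·Σ_{h₁,h₂∈H} alt_μ(h₁,h₂)·F^{h₁,h₂}`
of the ribbon algebra satisfies the four consistency conditions.
-/

open scoped Classical

noncomputable section

/-- `F^{g,h}`: the indicator function of the pair `(g,h)`. -/
def Fgh {G : Type*} (g h : G) : G × G → ℂ := fun x => if x = (g, h) then 1 else 0

/-- The multiplication of the ribbon algebra:
`(f₁ * f₂)(a,b) = Σ_{c ∈ G} f₁(a,c)·f₂(a,c⁻¹·b)`. -/
def rmul {G : Type*} [Group G] [Fintype G] (f₁ f₂ : G × G → ℂ) : G × G → ℂ :=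
  fun x => ∑ c : G, f₁ (x.1, c) * f₂ (x.1, c⁻¹ * x.2)

/-- The S-transformation `(𝐒f)(a,b) = f(b⁻¹,a)`. -/
def Strans {G : Type*} [Group G] (f : G × G → ℂ) : G × G → ℂ := fun x => f (x.2⁻¹, x.1)

/-- The T-transformation `(𝐓f)(a,b) = f(a,a⁻¹b)`. -/
def Ttrans {G : Type*} [Group G] (f : G × G → ℂ) : G × G → ℂ := fun x => f (x.1, x.1⁻¹ * x.2)

/-- The Ω-strand `Ω := (1/|G|)·Σ_{g∈G} F^{e,g}`. -/
def Omega (G : Type*) [Group G] [Fintype G] : G × G → ℂ :=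
  (Fintype.card G : ℂ)⁻¹ • ∑ g : G, Fgh (1 : G) g

/-- A 2-cocycle on a group `H` with values in `ℂˣ`. -/
def IsTwoCocycle {H : Type*} [Group H] (μ : H → H → ℂˣ) : Prop :=
  ∀ a b c : H, μ a b * μ (a * b) c = μ a (b * c) * μ b c

/-- `alt_μ(a,b) := μ(a,b)/μ(b,a)`. -/
def altMap {H : Type*} [Group H] (μ : H → H → ℂˣ) (a b : H) : ℂˣ := μ a b / μ b a

/-- The twisted boundary term
`Â_H^μ := (1/|H|)·Σ_{h₁∈H} Σ_{h₂∈H} alt_μ(h₁,h₂)·F^{h₁,h₂}`. -/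
def AhatMu {G : Type*} [Group G] [Fintype G] (H : Subgroup G) (μ : H → H → ℂˣ) :
    G × G → ℂ :=
  (Fintype.card H : ℂ)⁻¹ •
    ∑ h₁ : H, ∑ h₂ : H, ((altMap μ h₁ h₂ : ℂˣ) : ℂ) • Fgh (h₁ : G) (h₂ : G)

section AltLemmas
variable {H : Type*} [Group H] (μ : H → H → ℂˣ)

lemma muC (hμ : IsTwoCocycle μ) (a b c : H) :
    (μ a b : ℂ) * (μ (a*b) c : ℂ) = (μ a (b*c) : ℂ) * (μ b c : ℂ) := by
  exact_mod_cast congrArg (Units.val) (hμ a b c)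

lemma altC (a b : H) : ((altMap μ a b : ℂˣ) : ℂ) = (μ a b : ℂ) / (μ b a : ℂ) := by
  simp [altMap]

lemma mu_one_right (hμ : IsTwoCocycle μ) (a : H) : (μ a 1 : ℂ) = (μ 1 1 : ℂ) := by
  have h := muC μ hμ a 1 1
  simp only [mul_one, one_mul] at h
  exact mul_left_cancel₀ (Units.ne_zero _) h

lemma mu_one_left (hμ : IsTwoCocycle μ) (b : H) : (μ 1 b : ℂ) = (μ 1 1 : ℂ) := by
  have h := muC μ hμ 1 1 b
  simp only [mul_one, one_mul] at h
  exact (mul_right_cancel₀ (Units.ne_zero _) h).symm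

lemma altC_one_left (hμ : IsTwoCocycle μ) (b : H) : ((altMap μ 1 b : ℂˣ) : ℂ) = 1 := by
  rw [altC, mu_one_left μ hμ b, mu_one_right μ hμ b, div_self (Units.ne_zero _)]

lemma altC_one_right (hμ : IsTwoCocycle μ) (a : H) : ((altMap μ a 1 : ℂˣ) : ℂ) = 1 := by
  rw [altC, mu_one_right μ hμ a, mu_one_left μ hμ a, div_self (Units.ne_zero _)]

lemma altC_self (a : H) : ((altMap μ a a : ℂˣ) : ℂ) = 1 := by
  rw [altC, div_self (Units.ne_zero _)]

lemma altC_mul_right (hab : ∀ a b : H, a * b = b * a) (hμ : IsTwoCocycle μ) (a b c : H) :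
    ((altMap μ a (b*c) : ℂˣ) : ℂ) = ((altMap μ a b : ℂˣ) : ℂ) * ((altMap μ a c : ℂˣ) : ℂ) := by
  rw [altC, altC, altC, div_mul_div_comm,
    div_eq_div_iff (Units.ne_zero _) (by exact mul_ne_zero (Units.ne_zero _) (Units.ne_zero _))]
  have h1 := muC μ hμ a b c
  have h2 := muC μ hμ b a c
  rw [hab b a, hab a c] at h2
  have h3 := muC μ hμ b c a
  apply mul_right_cancel₀ (Units.ne_zero (μ b (c*a)) : ((μ b (c*a) : ℂ) ≠ 0))
  apply mul_right_cancel₀ (Units.ne_zero (μ b c) : ((μ b c : ℂ) ≠ 0))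
  linear_combination (-((μ b a : ℂ) * (μ c a : ℂ) * (μ b (c*a) : ℂ))) * h1 +
    ((μ a b : ℂ) * (μ c a : ℂ) * (μ b (c*a) : ℂ)) * h2 +
    (-((μ a b : ℂ) * (μ a c : ℂ) * (μ b (c*a) : ℂ))) * h3

lemma altC_swap (a b : H) :
    ((altMap μ b a : ℂˣ) : ℂ) = (((altMap μ a b : ℂˣ) : ℂ))⁻¹ := by
  rw [altC, altC, inv_div]

lemma altC_inv_left (hab : ∀ a b : H, a * b = b * a) (hμ : IsTwoCocycle μ) (a b : H) :
    ((altMap μ b⁻¹ a : ℂˣ) : ℂ) = ((altMap μ a b : ℂˣ) : ℂ) := by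
  have h : ((altMap μ a b⁻¹ : ℂˣ) : ℂ) * ((altMap μ a b : ℂˣ) : ℂ) = 1 := by
    rw [← altC_mul_right μ hab hμ, inv_mul_cancel, altC_one_right μ hμ]
  rw [altC_swap μ a b⁻¹]
  exact inv_eq_of_mul_eq_one_right h

lemma altC_T (hab : ∀ a b : H, a * b = b * a) (hμ : IsTwoCocycle μ) (a b : H) :
    ((altMap μ a (a⁻¹*b) : ℂˣ) : ℂ) = ((altMap μ a b : ℂˣ) : ℂ) := by
  have h : ((altMap μ a (a⁻¹*b) : ℂˣ) : ℂ)
      = ((altMap μ a a⁻¹ : ℂˣ) : ℂ) * ((altMap μ a b : ℂˣ) : ℂ) := by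
    rw [← altC_mul_right μ hab hμ]
  have h2 : ((altMap μ a a⁻¹ : ℂˣ) : ℂ) * ((altMap μ a a : ℂˣ) : ℂ) = 1 := by
    rw [← altC_mul_right μ hab hμ, inv_mul_cancel, altC_one_right μ hμ]
  rw [altC_self, mul_one] at h2
  rw [h, h2, one_mul]

lemma altC_absorb (hab : ∀ a b : H, a * b = b * a) (hμ : IsTwoCocycle μ) (a b c : H) :
    ((altMap μ a c : ℂˣ) : ℂ) * ((altMap μ a (c⁻¹*b) : ℂˣ) : ℂ) = ((altMap μ a b : ℂˣ) : ℂ) := by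
  rw [← altC_mul_right μ hab hμ, mul_inv_cancel_left]

end AltLemmas

section Apply
variable {G : Type*} [Group G] [Fintype G]

lemma sum_subtype_ind (H : Subgroup G) (f : H → ℂ) (a : G) :
    (∑ h : H, if a = (h : G) then f h else 0) = if ha : a ∈ H then f ⟨a, ha⟩ else 0 := by
  split_ifs with ha
  · rw [Fintype.sum_eq_single (⟨a, ha⟩ : H)]
    · simp
    · intro b hb
      rw [if_neg]
      intro hc
      exact hb (Subtype.ext hc.symm)
  · apply Finset.sum_eq_zero
    intro h _
    rw [if_neg]
    rintro rfl
    exact ha h.2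

lemma sum_mem_ind (H : Subgroup G) (f : G → ℂ) :
    (∑ c : G, if c ∈ H then f c else 0) = ∑ c : H, f (c : G) := by
  rw [Finset.sum_ite, Finset.sum_const_zero, add_zero]
  exact Finset.sum_subtype _ (by simp) f

lemma AhatMu_apply (H : Subgroup G) (μ : H → H → ℂˣ) (x : G × G) :
    AhatMu H μ x = if h : x.1 ∈ H ∧ x.2 ∈ H then
      (Fintype.card H : ℂ)⁻¹ * ((altMap μ ⟨x.1, h.1⟩ ⟨x.2, h.2⟩ : ℂˣ) : ℂ) else 0 := by
  have key : (∑ h₁ : H, ∑ h₂ : H, ((altMap μ h₁ h₂ : ℂˣ) : ℂ) • Fgh (h₁ : G) (h₂ : G)) x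
      = if h : x.1 ∈ H ∧ x.2 ∈ H then ((altMap μ ⟨x.1, h.1⟩ ⟨x.2, h.2⟩ : ℂˣ) : ℂ) else 0 := by
    rw [Finset.sum_apply]
    have step : ∀ h₁ : H, ((∑ h₂ : H, ((altMap μ h₁ h₂ : ℂˣ) : ℂ) • Fgh (h₁ : G) (h₂ : G)) x)
        = if x.1 = (h₁ : G) then
            (if hb : x.2 ∈ H then ((altMap μ h₁ ⟨x.2, hb⟩ : ℂˣ) : ℂ) else 0) else 0 := by
      intro h₁
      rw [Finset.sum_apply]
      have : ∀ h₂ : H, (((altMap μ h₁ h₂ : ℂˣ) : ℂ) • Fgh (h₁ : G) (h₂ : G)) x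
          = if x.1 = (h₁ : G) then (if x.2 = (h₂ : G) then ((altMap μ h₁ h₂ : ℂˣ) : ℂ) else 0)
            else 0 := by
        intro h₂
        simp only [Pi.smul_apply, Fgh, smul_eq_mul]
        by_cases h1 : x.1 = (h₁ : G) <;> by_cases h2 : x.2 = (h₂ : G) <;>
          simp [Prod.ext_iff, h1, h2]
      rw [Finset.sum_congr rfl fun h₂ _ => this h₂]
      by_cases h1 : x.1 = (h₁ : G)
      · simp only [if_pos h1]
        exact sum_subtype_ind H _ x.2
      · simp only [if_neg h1, Finset.sum_const_zero]
    rw [Finset.sum_congr rfl fun h₁ _ => step h₁, sum_subtype_ind H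
      (fun h₁ => if hb : x.2 ∈ H then ((altMap μ h₁ ⟨x.2, hb⟩ : ℂˣ) : ℂ) else 0) x.1]
    by_cases ha : x.1 ∈ H <;> by_cases hb : x.2 ∈ H <;> simp [ha, hb]
  rw [AhatMu, Pi.smul_apply, key, smul_eq_mul]
  split_ifs with h
  · rfl
  · rw [mul_zero]

lemma AhatMu_apply_mem (H : Subgroup G) (μ : H → H → ℂˣ) {a b : G} (ha : a ∈ H) (hb : b ∈ H) :
    AhatMu H μ (a, b)
      = (Fintype.card H : ℂ)⁻¹ * ((altMap μ ⟨a, ha⟩ ⟨b, hb⟩ : ℂˣ) : ℂ) := by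
  rw [AhatMu_apply H μ (a, b), dif_pos ⟨ha, hb⟩]

lemma AhatMu_apply_notmem (H : Subgroup G) (μ : H → H → ℂˣ) {a b : G}
    (h : ¬(a ∈ H ∧ b ∈ H)) : AhatMu H μ (a, b) = 0 := by
  rw [AhatMu_apply H μ (a, b), dif_neg h]

lemma Omega_apply (x : G × G) :
    Omega G x = if x.1 = 1 then (Fintype.card G : ℂ)⁻¹ else 0 := by
  rw [Omega, Pi.smul_apply, Finset.sum_apply, smul_eq_mul]
  have : ∀ g : G, Fgh (1 : G) g x = if x.1 = 1 then (if x.2 = g then (1:ℂ) else 0) else 0 := by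
    intro g
    simp only [Fgh]
    by_cases h1 : x.1 = 1 <;> by_cases h2 : x.2 = g <;> simp [Prod.ext_iff, h1, h2]
  rw [Finset.sum_congr rfl fun g _ => this g]
  split_ifs with h1
  · simp
  · simp

lemma cardH_ne_zero (H : Subgroup G) : (Fintype.card H : ℂ) ≠ 0 := by
  exact_mod_cast Fintype.card_pos.ne'

end Apply

/-- Abelian boundary terms satisfy the four consistency conditions. -/
theorem abelian_boundary_terms (G : Type*) [Group G] [Fintype G] (H : Subgroup G)
    (hab : ∀ a b : H, a * b = b * a) (μ : H → H → ℂˣ) (hμ : IsTwoCocycle μ) :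
    rmul (AhatMu H μ) (AhatMu H μ) = AhatMu H μ ∧
    rmul (AhatMu H μ) (Omega G) = Omega G ∧
    Strans (AhatMu H μ) = AhatMu H μ ∧
    Ttrans (AhatMu H μ) = AhatMu H μ := by
  refine ⟨?_, ?_, ?_, ?_⟩
  · -- idempotence
    funext x
    show (∑ c : G, AhatMu H μ (x.1, c) * AhatMu H μ (x.1, c⁻¹ * x.2)) = AhatMu H μ x
    by_cases ha : x.1 ∈ H
    · by_cases hb : x.2 ∈ H
      · have term : ∀ c : G, AhatMu H μ (x.1, c) * AhatMu H μ (x.1, c⁻¹ * x.2)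
            = if c ∈ H then (Fintype.card H : ℂ)⁻¹ * (Fintype.card H : ℂ)⁻¹ *
                ((altMap μ ⟨x.1, ha⟩ ⟨x.2, hb⟩ : ℂˣ) : ℂ) else 0 := by
          intro c
          by_cases hc : c ∈ H
          · rw [if_pos hc, AhatMu_apply_mem H μ ha hc,
              AhatMu_apply_mem H μ ha (mul_mem (inv_mem hc) hb)]
            have e : (⟨c⁻¹ * x.2, mul_mem (inv_mem hc) hb⟩ : H)
                = (⟨c, hc⟩ : H)⁻¹ * (⟨x.2, hb⟩ : H) := rfl
            rw [e, mul_mul_mul_comm, altC_absorb μ hab hμ]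
          · rw [if_neg hc, AhatMu_apply_notmem H μ (fun h => hc h.2), zero_mul]
        rw [Finset.sum_congr rfl fun c _ => term c, sum_mem_ind H, Finset.sum_const,
          Finset.card_univ, nsmul_eq_mul]
        have hx : AhatMu H μ x = (Fintype.card H : ℂ)⁻¹ *
            ((altMap μ ⟨x.1, ha⟩ ⟨x.2, hb⟩ : ℂˣ) : ℂ) := AhatMu_apply_mem H μ ha hb
        rw [hx]
        have hcard := cardH_ne_zero (G := G) H
        field_simp
      · have hx : AhatMu H μ x = 0 := AhatMu_apply_notmem H μ (fun h => hb h.2)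
        rw [hx]
        apply Finset.sum_eq_zero
        intro c _
        by_cases hc : c ∈ H
        · rw [AhatMu_apply_notmem H μ (a := x.1) (b := c⁻¹ * x.2) (fun h => hb (by
            have := mul_mem hc h.2
            rwa [mul_inv_cancel_left] at this)), mul_zero]
        · rw [AhatMu_apply_notmem H μ (a := x.1) (b := c) (fun h => hc h.2), zero_mul]
    · have hx : AhatMu H μ x = 0 := AhatMu_apply_notmem H μ (fun h => ha h.1)
      rw [hx]
      apply Finset.sum_eq_zero
      intro c _
      rw [AhatMu_apply_notmem H μ (a := x.1) (b := c) (fun h => ha h.1), zero_mul]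
  · -- absorbs Omega
    funext x
    show (∑ c : G, AhatMu H μ (x.1, c) * Omega G (x.1, c⁻¹ * x.2)) = Omega G x
    rw [Omega_apply x]
    by_cases h1 : x.1 = 1
    · rw [if_pos h1]
      have term : ∀ c : G, AhatMu H μ (x.1, c) * Omega G (x.1, c⁻¹ * x.2)
          = if c ∈ H then (Fintype.card H : ℂ)⁻¹ * (Fintype.card G : ℂ)⁻¹ else 0 := by
        intro c
        rw [Omega_apply (x.1, c⁻¹ * x.2), if_pos h1]
        by_cases hc : c ∈ H
        · rw [if_pos hc, AhatMu_apply_mem H μ (h1 ▸ one_mem H : x.1 ∈ H) hc]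
          have e : (⟨x.1, (h1 ▸ one_mem H : x.1 ∈ H)⟩ : H) = 1 := Subtype.ext h1
          rw [e, altC_one_left μ hμ, mul_one]
        · rw [if_neg hc, AhatMu_apply_notmem H μ (fun h => hc h.2), zero_mul]
      rw [Finset.sum_congr rfl fun c _ => term c, sum_mem_ind H, Finset.sum_const,
        Finset.card_univ, nsmul_eq_mul]
      rw [← mul_assoc, mul_inv_cancel₀ (cardH_ne_zero (G := G) H), one_mul]
    · rw [if_neg h1]
      apply Finset.sum_eq_zero
      intro c _
      rw [Omega_apply (x.1, c⁻¹ * x.2), if_neg h1, mul_zero]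
  · -- S-invariance
    funext x
    show AhatMu H μ (x.2⁻¹, x.1) = AhatMu H μ x
    by_cases ha : x.1 ∈ H
    · by_cases hb : x.2 ∈ H
      · have hx : AhatMu H μ x = (Fintype.card H : ℂ)⁻¹ *
            ((altMap μ ⟨x.1, ha⟩ ⟨x.2, hb⟩ : ℂˣ) : ℂ) := AhatMu_apply_mem H μ ha hb
        rw [AhatMu_apply_mem H μ (inv_mem hb) ha, hx]
        have e : (⟨x.2⁻¹, inv_mem hb⟩ : H) = (⟨x.2, hb⟩ : H)⁻¹ := rfl
        rw [e, altC_inv_left μ hab hμ]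
      · have hx : AhatMu H μ x = 0 := AhatMu_apply_notmem H μ (fun h => hb h.2)
        rw [AhatMu_apply_notmem H μ (a := x.2⁻¹) (b := x.1)
          (fun h => hb (by simpa using inv_mem h.1)), hx]
    · have hx : AhatMu H μ x = 0 := AhatMu_apply_notmem H μ (fun h => ha h.1)
      rw [AhatMu_apply_notmem H μ (a := x.2⁻¹) (b := x.1) (fun h => ha h.2), hx]
  · -- T-invariance
    funext x
    show AhatMu H μ (x.1, x.1⁻¹ * x.2) = AhatMu H μ x
    by_cases ha : x.1 ∈ H
    · by_cases hb : x.2 ∈ H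
      · have hx : AhatMu H μ x = (Fintype.card H : ℂ)⁻¹ *
            ((altMap μ ⟨x.1, ha⟩ ⟨x.2, hb⟩ : ℂˣ) : ℂ) := AhatMu_apply_mem H μ ha hb
        rw [AhatMu_apply_mem H μ ha (mul_mem (inv_mem ha) hb), hx]
        have e : (⟨x.1⁻¹ * x.2, mul_mem (inv_mem ha) hb⟩ : H)
            = (⟨x.1, ha⟩ : H)⁻¹ * (⟨x.2, hb⟩ : H) := rfl
        rw [e, altC_T μ hab hμ]
      · have hx : AhatMu H μ x = 0 := AhatMu_apply_notmem H μ (fun h => hb h.2)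
        rw [AhatMu_apply_notmem H μ (a := x.1) (b := x.1⁻¹ * x.2) (fun h => hb (by
          have := mul_mem ha h.2
          rwa [mul_inv_cancel_left] at this)), hx]
    · have hx : AhatMu H μ x = 0 := AhatMu_apply_notmem H μ (fun h => ha h.1)
      rw [AhatMu_apply_notmem H μ (a := x.1) (b := x.1⁻¹ * x.2) (fun h => ha h.1), hx]

end
end

section
/- Let G be a finite group, r ∈ G, and z ∈ Z(r) (i.e. zr = rz). Let C_z be the conjugacy class of z in G and q : C_z → G a transversal with q(c)·z·q(c)⁻¹ = c for all c ∈ C_z. Let D be the conjugacy class of r in the group Z(z). Then, as functions G × G → ℂ, Σ_{c∈C_z} Σ_{d∈D} F^{q(c)·d·q(c)⁻¹, c} = (|D|/|Z(z)|)·Σ_{g∈G} F^{g·r·g⁻¹, g·z·g⁻¹}. -/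
/-!
Statement 15: For a finite group `G`, `r ∈ G`, `z ∈ Z(r)`, a transversal `q` of the
conjugacy class `C_z` of `z`, and `D` the conjugacy class of `r` in the group `Z(z)`:
`Σ_{c∈C_z} Σ_{d∈D} F^{q(c)·d·q(c)⁻¹, c} = (|D|/|Z(z)|)·Σ_{g∈G} F^{g·r·g⁻¹, g·z·g⁻¹}`.
-/

open scoped Classical

noncomputable section

/-- The conjugacy class of `r` in `G`, as a `Finset`. -/
def conjClass {G : Type*} [Group G] [Fintype G] (r : G) : Finset G :=
  Finset.image (fun g => g * r * g⁻¹) Finset.univ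

/-- The centralizer `Z(r)` of `r` in `G`, as a `Finset`. -/
def centFinset {G : Type*} [Group G] [Fintype G] (r : G) : Finset G :=
  Finset.univ.filter fun z => z * r = r * z

/-- The conjugacy class of `x` in the group `Z(r)`, as a `Finset` of `G`. -/
def conjClassIn {G : Type*} [Group G] [Fintype G] (r x : G) : Finset G :=
  (centFinset r).image fun w => w * x * w⁻¹

section Aux

variable {G : Type*} [Group G] [Fintype G]

lemma mem_centFinset' {r w : G} : w ∈ centFinset r ↔ w * r = r * w := by
  simp [centFinset]

lemma centFinset_mul' {r u v : G} (hu : u ∈ centFinset r) (hv : v ∈ centFinset r) :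
    u * v ∈ centFinset r := by
  rw [mem_centFinset'] at *
  rw [mul_assoc, hv, ← mul_assoc, hu, mul_assoc]

lemma centFinset_inv' {r u : G} (hu : u ∈ centFinset r) : u⁻¹ ∈ centFinset r := by
  rw [mem_centFinset'] at *
  have := congrArg (fun t => u⁻¹ * t * u⁻¹) hu
  simpa [mul_assoc] using this.symm

lemma centFinset_conj {z w : G} (hw : w ∈ centFinset z) : w * z * w⁻¹ = z := by
  rw [mem_centFinset'] at hw
  rw [hw, mul_assoc, mul_inv_cancel, mul_one]

/-- fibers of the conjugation map on the centralizer all have the stabilizer's size -/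
lemma fiber_card (z r : G) {w₀ : G} (hw₀ : w₀ ∈ centFinset z) :
    ((centFinset z).filter (fun w => w * r * w⁻¹ = w₀ * r * w₀⁻¹)).card
      = ((centFinset z).filter (fun w => w * r * w⁻¹ = r)).card := by
  apply Finset.card_bij' (fun w _ => w₀⁻¹ * w) (fun u _ => w₀ * u)
  · intro w hw
    simp only [Finset.mem_filter] at hw ⊢
    refine ⟨centFinset_mul' (centFinset_inv' hw₀) hw.1, ?_⟩
    have := hw.2
    rw [mul_inv_rev, inv_inv]
    calc w₀⁻¹ * w * r * (w⁻¹ * w₀) = w₀⁻¹ * (w * r * w⁻¹) * w₀ := by group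
    _ = w₀⁻¹ * (w₀ * r * w₀⁻¹) * w₀ := by rw [this]
    _ = r := by group
  · intro u hu
    simp only [Finset.mem_filter] at hu ⊢
    refine ⟨centFinset_mul' hw₀ hu.1, ?_⟩
    have := hu.2
    rw [mul_inv_rev]
    calc w₀ * u * r * (u⁻¹ * w₀⁻¹) = w₀ * (u * r * u⁻¹) * w₀⁻¹ := by group
    _ = w₀ * r * w₀⁻¹ := by rw [this]
  · intro w _; group
  · intro u _; group

lemma sum_cent_conj (z r : G) (f : G → ℂ) :
    ∑ w ∈ centFinset z, f (w * r * w⁻¹)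
      = (((centFinset z).filter (fun w => w * r * w⁻¹ = r)).card : ℂ) *
          ∑ d ∈ conjClassIn z r, f d := by
  rw [← Finset.sum_fiberwise_of_maps_to (g := fun w => w * r * w⁻¹)
      (t := conjClassIn z r) (fun w hw => Finset.mem_image_of_mem _ hw)]
  rw [Finset.mul_sum]
  apply Finset.sum_congr rfl
  intro d hd
  obtain ⟨w₀, hw₀, rfl⟩ := Finset.mem_image.mp hd
  have hcard := fiber_card z r hw₀
  calc ∑ w ∈ (centFinset z).filter (fun w => w * r * w⁻¹ = w₀ * r * w₀⁻¹),
        f (w * r * w⁻¹)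
      = ∑ _w ∈ (centFinset z).filter (fun w => w * r * w⁻¹ = w₀ * r * w₀⁻¹),
        f (w₀ * r * w₀⁻¹) := by
        apply Finset.sum_congr rfl; intro w hw
        rw [(Finset.mem_filter.mp hw).2]
  _ = _ := by rw [Finset.sum_const, hcard, nsmul_eq_mul]

end Aux

theorem class_sum_identity_second (G : Type*) [Group G] [Fintype G]
    (r z : G) (hz : z * r = r * z)
    (q : G → G) (hq : ∀ c ∈ conjClass z, q c * z * (q c)⁻¹ = c) :
    ∑ c ∈ conjClass z, ∑ d ∈ conjClassIn z r, Fgh (q c * d * (q c)⁻¹) c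
      = (((conjClassIn z r).card : ℂ) / ((centFinset z).card : ℂ)) •
          ∑ g : G, Fgh (g * r * g⁻¹) (g * z * g⁻¹) := by
  classical
  set N := centFinset z with hN
  set D := conjClassIn z r with hD
  set C := conjClass z with hC
  set k := (N.filter (fun w => w * r * w⁻¹ = r)).card with hk
  -- cardinality relation: |N| = k * |D|
  have hcardN : (N.card : ℂ) = (k : ℂ) * (D.card : ℂ) := by
    have := sum_cent_conj z r (fun _ => (1 : ℂ))
    simpa [Finset.sum_const, nsmul_eq_mul] using this
  have hNne : (N.card : ℂ) ≠ 0 := by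
    have h1 : (1 : G) ∈ N := by rw [hN, mem_centFinset']; simp
    exact Nat.cast_ne_zero.mpr (Finset.card_pos.mpr ⟨1, h1⟩).ne'
  funext x
  simp only [Finset.sum_apply, Pi.smul_apply, smul_eq_mul]
  -- main regrouping of the RHS sum
  have hmain : ∑ g : G, Fgh (g * r * g⁻¹) (g * z * g⁻¹) x
      = ∑ c ∈ C, ∑ w ∈ N, Fgh (q c * (w * r * w⁻¹) * (q c)⁻¹) c x := by
    symm
    rw [Finset.sum_sigma']
    apply Finset.sum_nbij' (i := fun p => q p.1 * p.2)
      (j := fun g => (⟨g * z * g⁻¹, (q (g * z * g⁻¹))⁻¹ * g⟩ : (_ : G) × G))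
    · intro p _; exact Finset.mem_univ _
    · intro g _
      have hc : g * z * g⁻¹ ∈ C := Finset.mem_image_of_mem _ (Finset.mem_univ g)
      have hqc := hq _ hc
      refine Finset.mem_sigma.mpr ⟨hc, mem_centFinset'.mpr ?_⟩
      have h4 : ((q (g * z * g⁻¹))⁻¹ * g) * z * ((q (g * z * g⁻¹))⁻¹ * g)⁻¹ = z := by
        have h5 : ((q (g * z * g⁻¹))⁻¹ * g) * z * ((q (g * z * g⁻¹))⁻¹ * g)⁻¹
            = (q (g * z * g⁻¹))⁻¹ * (g * z * g⁻¹) * q (g * z * g⁻¹) := by group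
        rw [h5]
        have h7 := congrArg (fun t => (q (g * z * g⁻¹))⁻¹ * t * q (g * z * g⁻¹)) hqc
        simpa [mul_assoc] using h7.symm
      have h6 := congrArg (fun t => t * ((q (g * z * g⁻¹))⁻¹ * g)) h4
      simpa [mul_assoc] using h6
    · intro p hp
      obtain ⟨h1, h2⟩ := Finset.mem_sigma.mp hp
      have hqc := hq _ h1
      have hw : p.2 * z * p.2⁻¹ = z := centFinset_conj h2
      have hkey : q p.1 * p.2 * z * (q p.1 * p.2)⁻¹ = p.1 := by
        rw [mul_inv_rev]
        calc q p.1 * p.2 * z * (p.2⁻¹ * (q p.1)⁻¹)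
            = q p.1 * (p.2 * z * p.2⁻¹) * (q p.1)⁻¹ := by group
        _ = q p.1 * z * (q p.1)⁻¹ := by rw [hw]
        _ = p.1 := hqc
      show (⟨q p.1 * p.2 * z * (q p.1 * p.2)⁻¹,
        (q (q p.1 * p.2 * z * (q p.1 * p.2)⁻¹))⁻¹ * (q p.1 * p.2)⟩ : (_ : G) × G) = p
      rw [hkey, inv_mul_cancel_left]
    · intro g _; simp
    · intro p hp
      obtain ⟨h1, h2⟩ := Finset.mem_sigma.mp hp
      have hqc := hq _ h1
      have hw : p.2 * z * p.2⁻¹ = z := centFinset_conj h2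
      have hkey : q p.1 * p.2 * z * (q p.1 * p.2)⁻¹ = p.1 := by
        rw [mul_inv_rev]
        calc q p.1 * p.2 * z * (p.2⁻¹ * (q p.1)⁻¹)
            = q p.1 * (p.2 * z * p.2⁻¹) * (q p.1)⁻¹ := by group
        _ = q p.1 * z * (q p.1)⁻¹ := by rw [hw]
        _ = p.1 := hqc
      have hr : q p.1 * (p.2 * r * p.2⁻¹) * (q p.1)⁻¹
          = (q p.1 * p.2) * r * (q p.1 * p.2)⁻¹ := by group
      rw [hr, hkey]
  rw [hmain]
  have hstep : ∀ c ∈ C, (∑ w ∈ N, Fgh (q c * (w * r * w⁻¹) * (q c)⁻¹) c x)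
      = (k : ℂ) * ∑ d ∈ D, Fgh (q c * d * (q c)⁻¹) c x :=
    fun c _ => sum_cent_conj z r (fun d => Fgh (q c * d * (q c)⁻¹) c x)
  rw [Finset.sum_congr rfl hstep, ← Finset.mul_sum, ← mul_assoc]
  have hfac : ((D.card : ℂ) / (N.card : ℂ)) * (k : ℂ) = 1 := by
    rw [div_mul_eq_mul_div, mul_comm, ← hcardN, div_self hNne]
  rw [hfac, one_mul]

end
end
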